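/- Projection inequality relating multiplicity distances across variable splits (bivariate case): Let T_1, T_2 ⊆ F of size n, s a multiplicity parameter, f : T_1×T_2 → F_{<s}[z_1,z_2] and P ∈ F[x_1,x_2]. For each a ∈ T_1 and i ∈ [s], define f^{(i,a)} : T_2 → F_{<s−i}[z_2] by extracting the coefficient of z_1^i, and let P^{(i,a)}(x_2) = Coeff_{z_1^i}(P(a+z_1, x_2)). Then Δ_mult^{(s)}(f, Enc^{(s)}(P)) ≥ Σ_{a∈T_1} max_{i∈[s]} Δ_mult^{(s−i)}(f^{(i,a)}, Enc^{(s−i)}(P^{(i,a)})). -/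

import Mathlib

open MvPolynomial

/-- The shift `P(a + z₁, b + z₂)` of a bivariate polynomial (variable `0` is `z₁`). -/
noncomputable def shift2 {F : Type*} [CommRing F] (a b : F)
    (P : MvPolynomial (Fin 2) F) : MvPolynomial (Fin 2) F :=
  MvPolynomial.bind₁ (fun j => MvPolynomial.X j + MvPolynomial.C (![a, b] j)) P

/-- Extraction of the coefficient of `z₁^i` from a bivariate polynomial, as a polynomial
in the remaining variable. -/
noncomputable def extract {F : Type*} [CommRing F] (i : ℕ)
    (R : MvPolynomial (Fin 2) F) : MvPolynomial (Fin 1) F :=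
  Polynomial.coeff (MvPolynomial.finSuccEquiv F 1 R) i

/-- `dminM s R`: the minimum of `s` and the lowest degree of a nonzero monomial of `R`
(equal to `s` when `R = 0`). -/
noncomputable def dminM {F : Type*} [CommRing F] {m : ℕ} (s : ℕ)
    (R : MvPolynomial (Fin m) F) : ℕ :=
  sInf {k : ℕ | k = s ∨ ∃ e : Fin m →₀ ℕ, (e.sum fun _ j => j) = k ∧
    MvPolynomial.coeff e R ≠ 0}

lemma dminM_key {F : Type*} [CommRing F] (s i : ℕ) (R : MvPolynomial (Fin 2) F)
    (hi : i ≤ s) :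
    dminM s R ≤ i + dminM (s - i) (extract i R) := by
  set S' : Set ℕ := {k : ℕ | k = s - i ∨ ∃ e : Fin 1 →₀ ℕ, (e.sum fun _ j => j) = k ∧
    MvPolynomial.coeff e (extract i R) ≠ 0} with hS'
  have hne : (s - i) ∈ S' := Or.inl rfl
  have hmem : dminM (s - i) (extract i R) ∈ S' := Nat.sInf_mem ⟨_, hne⟩
  rcases hmem with h | ⟨e, hsum, hc⟩
  · rw [h, add_comm, Nat.sub_add_cancel hi]
    exact Nat.sInf_le (Or.inl rfl)
  · refine Nat.sInf_le (Or.inr ⟨Finsupp.cons i e, ?_, ?_⟩)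
    · rw [Finsupp.sum_cons, hsum]
    · rw [← MvPolynomial.finSuccEquiv_coeff_coeff]
      exact hc

lemma dminM_pointwise {F : Type*} [CommRing F] (s i : ℕ) (R : MvPolynomial (Fin 2) F)
    (hi : i ≤ s) :
    (s - i) - dminM (s - i) (extract i R) ≤ s - dminM s R := by
  have h := dminM_key s i R hi
  calc (s - i) - dminM (s - i) (extract i R)
      = s - (i + dminM (s - i) (extract i R)) := by rw [Nat.sub_sub]
    _ ≤ s - dminM s R := Nat.sub_le_sub_left h s

/-- Projection inequality relating multiplicity distances across a variable split
(bivariate case): the order-`s` multiplicity distance between `f` and `Enc^{(s)}(P)` on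
`T₁ × T₂` is at least the sum over columns `a ∈ T₁` of the maximum over `i ∈ [s]` of the
order-`(s−i)` multiplicity distance between the coefficient-of-`z₁^i` parts. -/
theorem projection_inequality {F : Type*} [Field F] (s : ℕ)
    (T₁ T₂ : Finset F) (f : F → F → MvPolynomial (Fin 2) F)
    (P : MvPolynomial (Fin 2) F) :
    ∑ a ∈ T₁, ∑ b ∈ T₂, (s - dminM s (f a b - shift2 a b P)) ≥
      ∑ a ∈ T₁, (Finset.range s).sup (fun i =>
        ∑ b ∈ T₂, ((s - i) - dminM (s - i) (extract i (f a b - shift2 a b P)))) := by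
  refine Finset.sum_le_sum fun a _ => ?_
  refine Finset.sup_le fun i hi => ?_
  refine Finset.sum_le_sum fun b _ => ?_
  exact dminM_pointwise s i (f a b - shift2 a b P) (Finset.mem_range.mp hi).le
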